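/- For every M ≥ 3, the family B_M of M-bounded triangular ladders is closed under taking prefixes: if π ∈ B_M and σ is a (nonempty) prefix of π, then σ ∈ B_M. -/

import Mathlib

noncomputable section

namespace TriangleRemoval

/-- The alphabet `{e, 0, 1}` of triangular-ladder words. -/
inductive Sym : Type
  | e : Sym
  | zero : Sym
  | one : Sym
deriving DecidableEq

/-- `nth π j` is the `j`-th symbol of `π` (1-based), if it exists. -/
def nth (π : List Sym) (j : ℕ) : Option Sym :=
  if j = 0 then none else π[j - 1]?

/-- One construction step of a triangular ladder. The state is
`(k, o, E)`: the last vertex `k`, the backward neighbor `o` of `k` other than `k - 1`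
(junk if the last symbol was `e`), and the current edge set `E`. -/
def ladderStep : ℕ × ℕ × Set (Sym2 ℕ) → Sym → ℕ × ℕ × Set (Sym2 ℕ)
  | (k, _, E), Sym.one => (k + 1, k - 1, insert s(k - 1, k + 1) (insert s(k, k + 1) E))
  | (k, o, E), Sym.zero => (k + 1, o, insert s(o, k + 1) (insert s(k, k + 1) E))
  | (k, _, E), Sym.e => (k + 1, 0, insert s(k, k + 1) E)

/-- The initial state of the construction, according to the first symbol:
`L_1` has edges `{02, 12}`, `L_e` has the single edge `12`. -/
def ladderInit : Sym → ℕ × ℕ × Set (Sym2 ℕ)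
  | Sym.one => (2, 0, {s(0, 2), s(1, 2)})
  | _ => (2, 0, {s(1, 2)})

/-- The data of the triangular ladder built from the word `π`. -/
def ladderData : List Sym → ℕ × ℕ × Set (Sym2 ℕ)
  | [] => (1, 0, ∅)
  | a :: rest => rest.foldl ladderStep (ladderInit a)

/-- The triangular ladder `L_π`, a graph on `{0, 1, …, |π|+1} ⊆ ℕ`. -/
def ladder (π : List Sym) : SimpleGraph ℕ :=
  SimpleGraph.fromEdgeSet (ladderData π).2.2

/-- `L_π` has an `f`-fan at the vertex `a > 0`. -/
def hasFanAt (π : List Sym) (f a : ℕ) : Prop :=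
  0 < a ∧
    ((nth π (a - 2) ≠ some Sym.e ∧
        ∀ b ∈ Finset.Icc (a + 1) (a + f + 1), (ladder π).Adj a b) ∨
     (nth π (a - 2) = some Sym.e ∧ (ladder π).Adj a (a - 1) ∧
        ∀ b ∈ Finset.Icc (a + 1) (a + f), (ladder π).Adj a b))

/-- `L_π` contains an `f`-fan. -/
def hasFan (π : List Sym) (f : ℕ) : Prop := ∃ a, hasFanAt π f a

/-- Membership in `Π`: no `0` in positions 1 or 2, at most two occurrences of `e`, and
no substrings `e0`, `e10`, `e1e`. -/
def memPi (π : List Sym) : Prop :=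
  nth π 1 ≠ some Sym.zero ∧ nth π 2 ≠ some Sym.zero ∧ π.count Sym.e ≤ 2 ∧
    ¬ [Sym.e, Sym.zero] <:+: π ∧ ¬ [Sym.e, Sym.one, Sym.zero] <:+: π ∧
    ¬ [Sym.e, Sym.one, Sym.e] <:+: π

/-- Membership in `B_M`: `π ∈ Π` is nonempty, contains no `M`-fan, and satisfies the
length restrictions according to the number of occurrences of `e`. -/
def memB (M : ℕ) (π : List Sym) : Prop :=
  memPi π ∧ π ≠ [] ∧ ¬ hasFan π M ∧
    ((π.count Sym.e = 0 ∧ π.length ≤ 3 * M - 1) ∨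
     (π.count Sym.e = 1 ∧ π.length ≤ 2 * M ∧ nth π (2 * M) ≠ some Sym.e) ∨
     (π.count Sym.e = 2 ∧ π.length ≤ M + 1 ∧ nth π (M + 1) ≠ some Sym.e))

/-- `π' = π_{z-1} ∘ 0` if `y < z-1` and `π' = π_{z-1} ∘ 1` if `y = z-1`. -/
def boundaryWord (π : List Sym) (y z : ℕ) : List Sym :=
  π.take (z - 1) ++ [if y < z - 1 then Sym.zero else Sym.one]

/-- `yz` is a boundary edge of `L_π` with respect to `B_M`. -/
def IsBoundaryEdge (M : ℕ) (π : List Sym) (y z : ℕ) : Prop :=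
  0 < y ∧ y < z ∧ (ladder π).Adj y z ∧ nth π y ≠ some Sym.e ∧
    ¬ memB M (boundaryWord π y z)

/-- `yz` is an outer boundary edge of `L_π` with respect to `B_M`. -/
def IsOuterBoundaryEdge (M : ℕ) (π : List Sym) (y z : ℕ) : Prop :=
  IsBoundaryEdge M π y z ∧ z = π.length + 1 ∧
    ((π.count Sym.e = 0 ∧ π.length = 3 * M - 1) ∨
     (π.count Sym.e = 1 ∧ π.length = 2 * M) ∨
     (π.count Sym.e = 2 ∧ π.length = M + 1))

/-- `yz` is a side boundary edge of `L_π` with respect to `B_M`. -/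
def IsSideBoundaryEdge (M : ℕ) (π : List Sym) (y z : ℕ) : Prop :=
  IsBoundaryEdge M π y z ∧ ¬ IsOuterBoundaryEdge M π y z

lemma nth_eq_of_prefix {σ π : List Sym} (h : σ <+: π) {j : ℕ} (hj : j ≤ σ.length) :
    nth σ j = nth π j := by
  unfold nth
  rcases Nat.eq_zero_or_pos j with rfl | hj0
  · simp
  · obtain ⟨t, rfl⟩ := h
    rw [if_neg (by omega), if_neg (by omega)]
    exact (List.getElem?_append_left (by omega)).symm

lemma nth_le_length {σ : List Sym} {j : ℕ} {x : Sym} (h : nth σ j = some x) :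
    j ≤ σ.length := by
  unfold nth at h
  by_contra hc
  rw [if_neg (by omega), List.getElem?_eq_none (by omega)] at h
  exact absurd h (by simp)

lemma nth_some_of_prefix {σ π : List Sym} (h : σ <+: π) {j : ℕ} {x : Sym}
    (hx : nth σ j = some x) : nth π j = some x := by
  rw [← nth_eq_of_prefix h (nth_le_length hx)]; exact hx

lemma nth_none_of_gt {σ : List Sym} {j : ℕ} (h : σ.length < j) : nth σ j = none := by
  unfold nth
  rcases Nat.eq_zero_or_pos j with rfl | hj0
  · simp
  · rw [if_neg (by omega), List.getElem?_eq_none (by omega)]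

lemma subset_foldl (l : List Sym) (st : ℕ × ℕ × Set (Sym2 ℕ)) :
    st.2.2 ⊆ (l.foldl ladderStep st).2.2 := by
  induction l generalizing st with
  | nil => exact subset_rfl
  | cons x xs ih =>
    refine subset_trans ?_ (ih (ladderStep st x))
    obtain ⟨k, o, E⟩ := st
    cases x <;> simp [ladderStep] <;>
      exact subset_trans (Set.subset_insert _ _) (Set.subset_insert _ _)

lemma edgeSet_mono {σ π : List Sym} (h : σ <+: π) (hne : σ ≠ []) :
    (ladderData σ).2.2 ⊆ (ladderData π).2.2 := by
  obtain ⟨t, rfl⟩ := h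
  match σ, hne with
  | a :: s, _ =>
    show (ladderData (a :: s)).2.2 ⊆ (ladderData (a :: (s ++ t))).2.2
    simp only [ladderData, List.foldl_append]
    exact subset_foldl t _

/-- Invariant for the ladder construction. -/
def Inv (n : ℕ) (st : ℕ × ℕ × Set (Sym2 ℕ)) : Prop :=
  st.1 = n ∧ st.2.1 ≤ n ∧ ∀ e ∈ st.2.2, ∀ x ∈ e, x ≤ n

lemma inv_step {n : ℕ} {st : ℕ × ℕ × Set (Sym2 ℕ)} (h : Inv n st) (x : Sym) :
    Inv (n + 1) (ladderStep st x) := by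
  obtain ⟨k, o, E⟩ := st
  obtain ⟨h1, h2, h3⟩ := h
  dsimp at h1 h2 h3
  subst h1
  cases x <;> refine ⟨by simp [ladderStep], by simp only [ladderStep]; omega, ?_⟩ <;>
    intro e he y hy <;>
    simp only [ladderStep, Set.mem_insert_iff] at he <;>
    rcases he with rfl | he
  · simp only [Sym2.mem_iff] at hy; omega
  · exact le_trans (h3 e he y hy) (by omega)
  · simp only [Sym2.mem_iff] at hy; rcases hy with rfl | rfl <;> omega
  · rcases he with rfl | he
    · simp only [Sym2.mem_iff] at hy; rcases hy with rfl | rfl <;> omega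
    · exact le_trans (h3 e he y hy) (by omega)
  · simp only [Sym2.mem_iff] at hy; rcases hy with rfl | rfl <;> omega
  · rcases he with rfl | he
    · simp only [Sym2.mem_iff] at hy; rcases hy with rfl | rfl <;> omega
    · exact le_trans (h3 e he y hy) (by omega)

lemma inv_foldl {n : ℕ} {st : ℕ × ℕ × Set (Sym2 ℕ)} (h : Inv n st) (l : List Sym) :
    Inv (n + l.length) (l.foldl ladderStep st) := by
  induction l generalizing n st with
  | nil => simpa using h
  | cons x xs ih =>
    have := ih (inv_step h x)
    simpa [Nat.add_assoc, Nat.add_comm 1 xs.length] using this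

lemma inv_init (a : Sym) : Inv 2 (ladderInit a) := by
  cases a <;> refine ⟨by simp [ladderInit], by simp [ladderInit], ?_⟩ <;> intro e he y hy <;>
    simp only [ladderInit, Set.mem_insert_iff, Set.mem_singleton_iff] at he <;>
    first
    | (rcases he with rfl | rfl <;> simp only [Sym2.mem_iff] at hy <;>
        rcases hy with rfl | rfl <;> omega)
    | (subst he; simp only [Sym2.mem_iff] at hy; rcases hy with rfl | rfl <;> omega)

lemma ladder_bound {σ : List Sym} (hne : σ ≠ []) :
    ∀ e ∈ (ladderData σ).2.2, ∀ x ∈ e, x ≤ σ.length + 1 := by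
  match σ, hne with
  | a :: s, _ =>
    have h := (inv_foldl (inv_init a) s).2.2
    intro e he x hx
    have h2 := h e he x hx
    simp only [List.length_cons]
    omega

lemma adj_of_prefix {σ π : List Sym} (h : σ <+: π) (hne : σ ≠ []) {x y : ℕ}
    (hxy : (ladder σ).Adj x y) : (ladder π).Adj x y := by
  rw [ladder, SimpleGraph.fromEdgeSet_adj] at hxy ⊢
  exact ⟨edgeSet_mono h hne hxy.1, hxy.2⟩

lemma hasFan_of_prefix {σ π : List Sym} (h : σ <+: π) (hne : σ ≠ []) {f : ℕ}
    (hf : 1 ≤ f) (hfan : hasFan σ f) : hasFan π f := by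
  obtain ⟨a, ha0, hcase⟩ := hfan
  refine ⟨a, ha0, ?_⟩
  rcases hcase with ⟨hnth, hadj⟩ | ⟨hnth, hadj1, hadj⟩
  · left
    have h1 := hadj (a + f + 1) (by simp)
    rw [ladder, SimpleGraph.fromEdgeSet_adj] at h1
    have hb : a + f + 1 ≤ σ.length + 1 :=
      ladder_bound hne _ h1.1 (a + f + 1) (by simp)
    refine ⟨?_, fun b hb' => adj_of_prefix h hne (hadj b hb')⟩
    rw [← nth_eq_of_prefix h (by omega)]
    exact hnth
  · right
    exact ⟨nth_some_of_prefix h hnth, adj_of_prefix h hne hadj1,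
      fun b hb' => adj_of_prefix h hne (hadj b hb')⟩

/-- For every `M ≥ 3`, the family `B_M` of `M`-bounded triangular
ladders is closed under taking (nonempty) prefixes. -/
theorem memB_of_prefix (M : ℕ) (hM : 3 ≤ M) (π σ : List Sym)
    (hπ : memB M π) (hpre : σ <+: π) (hne : σ ≠ []) : memB M σ := by
  obtain ⟨⟨hp1, hp2, hp3, hp4, hp5, hp6⟩, -, hnofan, hlen⟩ := hπ
  have hinf : ∀ l : List Sym, l <:+: σ → l <:+: π :=
    fun l hl => hl.trans hpre.isInfix
  have hcnt : σ.count Sym.e ≤ π.count Sym.e := hpre.count_le _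
  have hlenle : σ.length ≤ π.length := hpre.length_le
  refine ⟨⟨?_, ?_, le_trans hcnt hp3, fun hc => hp4 (hinf _ hc),
      fun hc => hp5 (hinf _ hc), fun hc => hp6 (hinf _ hc)⟩, hne,
    fun hc => hnofan (hasFan_of_prefix hpre hne (by omega) hc), ?_⟩
  · intro hc; exact hp1 (nth_some_of_prefix hpre hc)
  · intro hc; exact hp2 (nth_some_of_prefix hpre hc)
  · rcases hlen with ⟨hc0, hl0⟩ | ⟨hc1, hl1, hn1⟩ | ⟨hc2, hl2, hn2⟩
    · left
      refine ⟨by omega, by omega⟩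
    · rcases Nat.lt_or_ge (σ.count Sym.e) 1 with hσc | hσc
      · left; exact ⟨by omega, by omega⟩
      · right; left
        refine ⟨by omega, by omega, fun hc => hn1 (nth_some_of_prefix hpre hc)⟩
    · rcases Nat.lt_or_ge (σ.count Sym.e) 1 with hσc | hσc
      · left; exact ⟨by omega, by omega⟩
      · rcases Nat.lt_or_ge (σ.count Sym.e) 2 with hσc2 | hσc2
        · right; left
          refine ⟨by omega, by omega, ?_⟩
          rw [nth_none_of_gt (by omega)]
          simp
        · right; right
          exact ⟨by omega, by omega, fun hc => hn2 (nth_some_of_prefix hpre hc)⟩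

end TriangleRemoval
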